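/- Let G be a nontrivial group, g ∈ G a nontrivial element, and n ∈ ℕ. In the free product G * ⟨x⟩ of G with an infinite cyclic group generated by x, the homomorphism G * F_n → G * ⟨x⟩ that is the identity on G and sends the i-th free generator of F_n to xⁱgxⁱ (for i = 1, …, n) is injective; in particular, the subgroup of G * ⟨x⟩ generated by G together with xgx, x²gx², …, xⁿgxⁿ is naturally isomorphic to G * F_n. -/

import Mathlib

open Monoid

namespace FPEAux

universe u

abbrev A : Type u := FreeGroup (ULift.{u} Unit)

abbrev xA : A.{u} := FreeGroup.of (ULift.up ())

def sigmaA : A.{u} →* Multiplicative ℤ := FreeGroup.lift fun _ => Multiplicative.ofAdd 1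

lemma sigmaA_xA_zpow (k : ℤ) : sigmaA.{u} (xA.{u} ^ k) = Multiplicative.ofAdd k := by
  rw [map_zpow]
  have h : sigmaA.{u} xA.{u} = Multiplicative.ofAdd 1 := FreeGroup.lift_apply_of
  rw [h, ← ofAdd_zsmul, smul_eq_mul, mul_one]

lemma xA_zpow_inj {k l : ℤ} (h : (xA.{u} : A) ^ k = xA ^ l) : k = l := by
  have := congrArg sigmaA.{u} h
  rw [sigmaA_xA_zpow.{u}, sigmaA_xA_zpow.{u}] at this
  simpa using this

lemma xA_zpow_ne_one {k : ℤ} (hk : k ≠ 0) : (xA.{u} : A) ^ k ≠ 1 := by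
  intro h
  exact hk (xA_zpow_inj.{u} (by simpa using h))

lemma A_cyclic (a : A.{u}) : ∃ k : ℤ, a = xA ^ k := by
  have h1 : (Set.range (FreeGroup.of : ULift Unit → A.{u})) = {xA.{u}} := by
    ext y; simp [xA, Set.range_unique]
  have : a ∈ Subgroup.closure ({xA.{u}} : Set A) := by
    rw [← h1, FreeGroup.closure_range_of]; trivial
  obtain ⟨k, hk⟩ := Subgroup.mem_closure_singleton.mp this
  exact ⟨k, hk.symm⟩


variable {G : Type u} [Group G]

abbrev H2 (G : Type u) : Bool → Type u := fun b => cond b G A.{u}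

instance instGroupH2 : ∀ b, Group (H2 G b) := fun b =>
  Bool.rec (inferInstanceAs (Group A.{u})) (inferInstanceAs (Group G)) b

instance instDecEqH2 [DecidableEq G] : ∀ b, DecidableEq (H2 G b) := fun b =>
  Bool.rec (inferInstanceAs (DecidableEq A.{u})) (inferInstanceAs (DecidableEq G)) b

abbrev L (G : Type u) [Group G] := Monoid.CoprodI (H2 G)

def og (c : G) : L G := Monoid.CoprodI.of (M := H2 G) (i := true) c

def ox (G : Type u) [Group G] (a : A.{u}) : L G :=
  Monoid.CoprodI.of (M := H2 G) (i := false) a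

section Sets

variable [DecidableEq G]

open Monoid.CoprodI

lemma smul_toList {b : Bool} (m : H2 G b) (hm : m ≠ 1) (w : Word (H2 G))
    (hw : w.fstIdx ≠ some b) :
    ((Monoid.CoprodI.of m : L G) • w).toList = ⟨b, m⟩ :: w.toList := by
  have h := (Word.cons_eq_smul (m := m) (ls := w) (h1 := hw) (h2 := hm)).symm
  rw [h]
  rfl

lemma fstIdx_smul {b : Bool} (m : H2 G b) (hm : m ≠ 1) (w : Word (H2 G))
    (hw : w.fstIdx ≠ some b) :
    ((Monoid.CoprodI.of m : L G) • w).fstIdx = some b := by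
  rw [Word.fstIdx, smul_toList m hm w hw]
  rfl

/-- Words starting with a letter in `G`. -/
def Gset (G : Type u) [Group G] [DecidableEq G] : Set (Word (H2 G)) :=
  { w | ∃ (v : Word (H2 G)) (c : G), c ≠ 1 ∧ v.fstIdx ≠ some true ∧ w = og c • v }

/-- Words starting with `x^e` followed by a letter in `G`. -/
def Yset (G : Type u) [Group G] [DecidableEq G] (e : ℤ) : Set (Word (H2 G)) :=
  { w | ∃ (v : Word (H2 G)) (c : G), c ≠ 1 ∧ v.fstIdx ≠ some true ∧
      w = ox G (xA ^ e) • (og c • v) }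

lemma Gset_fstIdx {w : Word (H2 G)} (hw : w ∈ Gset G) : w.fstIdx = some true := by
  obtain ⟨v, c, hc, hv, rfl⟩ := hw
  exact fstIdx_smul (b := true) c hc v hv

lemma Yset_head {e : ℤ} (he : e ≠ 0) {w : Word (H2 G)} (hw : w ∈ Yset G e) :
    w.toList.head? = some ⟨false, xA ^ e⟩ := by
  obtain ⟨v, c, hc, hv, rfl⟩ := hw
  have h1 : ((og c : L G) • v).fstIdx = some true := fstIdx_smul (b := true) c hc v hv
  have h2 : ((og c : L G) • v).fstIdx ≠ some false := by rw [h1]; simp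
  rw [ox, smul_toList (b := false) (xA ^ e) (xA_zpow_ne_one he) _ h2]
  rfl

lemma Yset_fstIdx {e : ℤ} (he : e ≠ 0) {w : Word (H2 G)} (hw : w ∈ Yset G e) :
    w.fstIdx = some false := by
  rw [Word.fstIdx, Yset_head he hw]
  rfl

end Sets


/-- The element `x^a c x^a` of `G * ⟨x⟩`. -/
def Vf (G : Type u) [Group G] (a : ℤ) (c : G) : L G := ox G (xA ^ a) * og c * ox G (xA ^ a)

lemma Vf_inv (a : ℤ) (c : G) : (Vf G a c)⁻¹ = Vf G (-a) c⁻¹ := by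
  simp only [Vf, ox, og, mul_inv_rev, ← map_inv, ← zpow_neg, mul_assoc]

section Steps

variable [DecidableEq G]

open Monoid.CoprodI

lemma step_G {a : ℤ} (ha : a ≠ 0) {c : G} (hc : c ≠ 1) {w : Word (H2 G)}
    (hw : w ∈ Gset G) : Vf G a c • w ∈ Yset G a := by
  obtain ⟨v, c', hc', hv, rfl⟩ := hw
  have h1 : ((og c' : L G) • v).fstIdx = some true := fstIdx_smul (b := true) c' hc' v hv
  have h2 : ((og c' : L G) • v).fstIdx ≠ some false := by rw [h1]; simp
  refine ⟨ox G (xA ^ a) • (og c' • v), c, hc, ?_, ?_⟩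
  · rw [ox, fstIdx_smul (b := false) (xA ^ a) (xA_zpow_ne_one ha) _ h2]
    simp
  · rw [Vf, mul_smul, mul_smul]

lemma step_Y {a e : ℤ} (ha : a ≠ 0) (hae : a + e ≠ 0) {c : G} (hc : c ≠ 1)
    {w : Word (H2 G)} (hw : w ∈ Yset G e) : Vf G a c • w ∈ Yset G a := by
  obtain ⟨v, c', hc', hv, rfl⟩ := hw
  have h1 : ((og c' : L G) • v).fstIdx = some true := fstIdx_smul (b := true) c' hc' v hv
  have h2 : ((og c' : L G) • v).fstIdx ≠ some false := by rw [h1]; simp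
  have key : Vf G a c • (ox G (xA ^ e) • (og c' • v))
      = ox G (xA ^ a) • (og c • (ox G (xA ^ (a + e)) • (og c' • v))) := by
    have hmul : ox G (xA ^ a) * ox G (xA ^ e) = ox G (xA ^ (a + e)) := by
      rw [ox, ox, ox, ← map_mul, ← zpow_add]
    rw [Vf, mul_smul, mul_smul, ← mul_smul (ox G (xA ^ a)) (ox G (xA ^ e)), hmul]
  rw [key]
  refine ⟨ox G (xA ^ (a + e)) • (og c' • v), c, hc, ?_, rfl⟩
  rw [ox, fstIdx_smul (b := false) (xA ^ (a + e)) (xA_zpow_ne_one hae) _ h2]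
  simp

lemma iter_Y {a : ℤ} (ha : a ≠ 0) {c : G} (hc : c ≠ 1) (k : ℕ) {w : Word (H2 G)}
    (hw : w ∈ Yset G a) : Vf G a c ^ k • w ∈ Yset G a := by
  induction k generalizing w with
  | zero => simpa using hw
  | succ k ih =>
    have ha2 : a + a ≠ 0 := by omega
    rw [pow_succ', mul_smul]
    exact step_Y ha ha2 hc (ih hw)

lemma pow_mem {a : ℤ} (ha : a ≠ 0) {c : G} (hc : c ≠ 1) (k : ℕ) {w : Word (H2 G)}
    (hstart : w ∈ Gset G ∨ ∃ e, a + e ≠ 0 ∧ w ∈ Yset G e) :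
    Vf G a c ^ (k + 1) • w ∈ Yset G a := by
  rw [pow_succ, mul_smul]
  refine iter_Y ha hc k ?_
  rcases hstart with h | ⟨e, hae, h⟩
  · exact step_G ha hc h
  · exact step_Y ha hae hc h

lemma zpow_mem {a : ℤ} (ha : a ≠ 0) {c : G} (hc : c ≠ 1) {k : ℤ} (hk : k ≠ 0)
    {w : Word (H2 G)}
    (hstart : w ∈ Gset G ∨ ∃ e, a + e ≠ 0 ∧ -a + e ≠ 0 ∧ w ∈ Yset G e) :
    Vf G a c ^ k • w ∈ Yset G a ∪ Yset G (-a) := by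
  rcases lt_or_gt_of_ne hk with hneg | hpos
  · right
    have h1 : Vf G a c ^ k = Vf G (-a) c⁻¹ ^ ((-k).toNat - 1 + 1 : ℕ) := by
      rw [← Vf_inv, ← zpow_natCast, inv_zpow']
      congr 1
      omega
    rw [h1]
    refine pow_mem (by omega) (inv_ne_one.mpr hc) _ ?_
    rcases hstart with h | ⟨e, _, hae2, h⟩
    · exact Or.inl h
    · exact Or.inr ⟨e, hae2, h⟩
  · left
    have h1 : Vf G a c ^ k = Vf G a c ^ (k.toNat - 1 + 1 : ℕ) := by
      rw [← zpow_natCast]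
      congr 1
      omega
    rw [h1]
    refine pow_mem ha hc _ ?_
    rcases hstart with h | ⟨e, hae, _, h⟩
    · exact Or.inl h
    · exact Or.inr ⟨e, hae, h⟩

end Steps


section Family

open Monoid.CoprodI

abbrev HF (G : Type u) (n : ℕ) : Option (Fin n) → Type u :=
  fun o => Option.elim o G (fun _ => A.{u})

instance instGroupHF {n : ℕ} : ∀ o : Option (Fin n), Group (HF G n o) := fun o =>
  Option.rec (inferInstanceAs (Group G)) (fun _ => inferInstanceAs (Group A.{u})) o

/-- The maps defining our homomorphism `G * F_n → G * ⟨x⟩`. -/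
def fmap (n : ℕ) (g : G) : ∀ o : Option (Fin n), HF G n o →* L G := fun o =>
  Option.rec (motive := fun o => HF G n o →* L G)
    (Monoid.CoprodI.of (M := H2 G) (i := true))
    (fun i => FreeGroup.lift fun _ => Vf G ((i : ℕ) + 1) g) o

variable [DecidableEq G]

/-- The ping-pong sets. -/
def XX (G : Type u) [Group G] [DecidableEq G] (n : ℕ) :
    Option (Fin n) → Set (Word (H2 G)) := fun o =>
  Option.rec (Gset G) (fun i => Yset G ((i : ℕ) + 1) ∪ Yset G (-((i : ℕ) + 1))) o

lemma Yset_disjoint {e e' : ℤ} (he : e ≠ 0) (hne : e ≠ e') {w : Word (H2 G)}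
    (hw : w ∈ Yset G e) (hw' : w ∈ Yset G e') : False := by
  have he' : e' ≠ 0 := by
    intro h
    subst h
    have h1 := Yset_fstIdx he hw
    obtain ⟨v, c, hc, hv, hweq⟩ := hw'
    have h0 : ox G (xA ^ (0 : ℤ)) = 1 := by rw [zpow_zero, ox, map_one]
    rw [h0, one_smul] at hweq
    have h2 : w.fstIdx = some true := by
      rw [hweq]; exact fstIdx_smul (b := true) c hc v hv
    rw [h1] at h2
    simp at h2
  have h1 := Yset_head he hw
  have h2 := Yset_head he' hw'
  rw [h1] at h2
  have h3 : (⟨false, xA ^ e⟩ : Σ b, H2 G b) = ⟨false, xA ^ e'⟩ := by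
    exact Option.some_injective _ h2
  have h4 : (xA : A.{u}) ^ e = xA ^ e' := by
    simpa using h3
  exact hne (xA_zpow_inj h4)

end Family


section Main

open Monoid.CoprodI

variable [DecidableEq G]

lemma lift_inj (n : ℕ) (hn : 0 < n) (g : G) (hg : g ≠ 1) :
    Function.Injective (Monoid.CoprodI.lift (fmap n g)) := by
  haveI : Nonempty (Fin n) := ⟨⟨0, hn⟩⟩
  apply Monoid.CoprodI.lift_injective_of_ping_pong (fmap n g) ?hcard (XX G n)
    ?hne ?hdisj ?hpp
  case hcard =>
    refine Or.inr ⟨some ⟨0, hn⟩, ?_⟩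
    show (3 : Cardinal) ≤ Cardinal.mk A.{u}
    exact le_trans (by exact_mod_cast (Cardinal.nat_lt_aleph0 3).le)
      (Cardinal.aleph0_le_mk A.{u})
  case hne =>
    rintro (_ | i)
    · exact ⟨og g • Word.empty, Word.empty, g, hg, by simp [Word.fstIdx, Word.empty], rfl⟩
    · exact ⟨_, Or.inl ⟨Word.empty, g, hg, by simp [Word.fstIdx, Word.empty], rfl⟩⟩
  case hdisj =>
    rintro (_ | i) (_ | j) hne
    · exact absurd rfl hne
    · refine Set.disjoint_left.mpr fun w hw hw' => ?_
      have h1 := Gset_fstIdx hw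
      rcases hw' with h | h
      · rw [Yset_fstIdx (by omega) h] at h1; simp at h1
      · rw [Yset_fstIdx (by omega) h] at h1; simp at h1
    · refine Set.disjoint_left.mpr fun w hw hw' => ?_
      have h1 := Gset_fstIdx hw'
      rcases hw with h | h
      · rw [Yset_fstIdx (by omega) h] at h1; simp at h1
      · rw [Yset_fstIdx (by omega) h] at h1; simp at h1
    · have hij : ((i : ℕ) : ℤ) ≠ ((j : ℕ) : ℤ) := by
        intro h
        exact hne (by simp [Fin.ext_iff]; omega)
      refine Set.disjoint_left.mpr fun w hw hw' => ?_
      rcases hw with h | h <;> rcases hw' with h' | h'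
      · exact Yset_disjoint (by omega) (by omega) h h'
      · exact Yset_disjoint (by omega) (by omega) h h'
      · exact Yset_disjoint (by omega) (by omega) h h'
      · exact Yset_disjoint (by omega) (by omega) h h'
  case hpp =>
    rintro (_ | i) (_ | j) hne h h1 w hw <;>
      rw [Set.mem_smul_set] at hw
    · exact absurd rfl hne
    · -- h : G acting on X (some j)
      obtain ⟨u, hu, rfl⟩ := hw
      have hufst : u.fstIdx = some false := by
        rcases hu with h' | h'
        · exact Yset_fstIdx (by omega) h'
        · exact Yset_fstIdx (by omega) h'
      refine ⟨u, h, h1, by rw [hufst]; simp, rfl⟩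
    · -- h : A, i-th letters, acting on Gset
      obtain ⟨u, hu, rfl⟩ := hw
      obtain ⟨k, rfl⟩ := A_cyclic h
      have hk : k ≠ 0 := by rintro rfl; exact h1 (zpow_zero _)
      have hmap : fmap n g (some i) (xA ^ k) = Vf G ((i : ℕ) + 1) g ^ k := by
        show (FreeGroup.lift fun _ => Vf G ((i : ℕ) + 1) g) (xA ^ k) = _
        rw [map_zpow, FreeGroup.lift_apply_of]
      rw [hmap]
      exact zpow_mem (by omega) hg hk (Or.inl hu)
    · obtain ⟨u, hu, rfl⟩ := hw
      obtain ⟨k, rfl⟩ := A_cyclic h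
      have hk : k ≠ 0 := by rintro rfl; exact h1 (zpow_zero _)
      have hij : ((i : ℕ) : ℤ) ≠ ((j : ℕ) : ℤ) := by
        intro h
        exact hne (by simp [Fin.ext_iff]; omega)
      have hmap : fmap n g (some i) (xA ^ k) = Vf G ((i : ℕ) + 1) g ^ k := by
        show (FreeGroup.lift fun _ => Vf G ((i : ℕ) + 1) g) (xA ^ k) = _
        rw [map_zpow, FreeGroup.lift_apply_of]
      rw [hmap]
      refine zpow_mem (by omega) hg hk (Or.inr ?_)
      rcases hu with h' | h'
      · exact ⟨(j : ℕ) + 1, by omega, by omega, h'⟩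
      · exact ⟨-((j : ℕ) + 1), by omega, by omega, h'⟩

end Main


end FPEAux

open FPEAux in
theorem free_product_embedding (G : Type*) [Group G] (g : G) (hg : g ≠ 1) (n : ℕ) :
    Function.Injective
      (Monoid.Coprod.lift
        (Monoid.Coprod.inl : G →* Monoid.Coprod G (FreeGroup Unit))
        (FreeGroup.lift fun i : Fin n =>
          (Monoid.Coprod.inr (FreeGroup.of ()) : Monoid.Coprod G (FreeGroup Unit)) ^
              ((i : ℕ) + 1) *
            Monoid.Coprod.inl g *
            (Monoid.Coprod.inr (FreeGroup.of ()) : Monoid.Coprod G (FreeGroup Unit)) ^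
              ((i : ℕ) + 1))) := by
  classical
  set φ : Monoid.Coprod G (FreeGroup (Fin n)) →* Monoid.Coprod G (FreeGroup Unit) :=
    Monoid.Coprod.lift
        (Monoid.Coprod.inl : G →* Monoid.Coprod G (FreeGroup Unit))
        (FreeGroup.lift fun i : Fin n =>
          (Monoid.Coprod.inr (FreeGroup.of ()) : Monoid.Coprod G (FreeGroup Unit)) ^
              ((i : ℕ) + 1) *
            Monoid.Coprod.inl g *
            (Monoid.Coprod.inr (FreeGroup.of ()) : Monoid.Coprod G (FreeGroup Unit)) ^
              ((i : ℕ) + 1)) with hφ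
  rcases Nat.eq_zero_or_pos n with hn | hn
  · subst hn
    set ψ : Monoid.Coprod G (FreeGroup Unit) →* Monoid.Coprod G (FreeGroup (Fin 0)) :=
      Monoid.Coprod.lift Monoid.Coprod.inl 1 with hψ
    have hcomp : ψ.comp φ = MonoidHom.id _ := by
      refine Monoid.Coprod.hom_ext (MonoidHom.ext fun a => ?_)
        (FreeGroup.ext_hom _ _ fun i => i.elim0)
      simp [hφ, hψ]
    intro u v huv
    have h1 : ψ (φ u) = ψ (φ v) := by rw [huv]
    rw [← MonoidHom.comp_apply, ← MonoidHom.comp_apply, hcomp] at h1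
    exact h1
  · -- main case
    set e : Monoid.Coprod G (FreeGroup (Fin n)) →* Monoid.CoprodI (HF G n) :=
      Monoid.Coprod.lift (Monoid.CoprodI.of (M := HF G n) (i := none))
        (FreeGroup.lift fun i : Fin n =>
          Monoid.CoprodI.of (M := HF G n) (i := some i) xA) with he
    set e' : Monoid.CoprodI (HF G n) →* Monoid.Coprod G (FreeGroup (Fin n)) :=
      Monoid.CoprodI.lift (fun o =>
        Option.rec (motive := fun o => HF G n o →* Monoid.Coprod G (FreeGroup (Fin n)))
          Monoid.Coprod.inl
          (fun i => (Monoid.Coprod.inr).comp (FreeGroup.lift fun _ => FreeGroup.of i)) o)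
        with he'
    have hee : e'.comp e = MonoidHom.id _ := by
      refine Monoid.Coprod.hom_ext (MonoidHom.ext fun a => ?_)
        (FreeGroup.ext_hom _ _ fun i => ?_)
      · simp only [MonoidHom.comp_apply, MonoidHom.id_apply, he, he',
          Monoid.Coprod.lift_apply_inl]
        exact Monoid.CoprodI.lift_of (M := HF G n) _ (i := none) a
      · simp only [MonoidHom.comp_apply, MonoidHom.id_apply, he, he',
          Monoid.Coprod.lift_apply_inr, FreeGroup.lift_apply_of, Monoid.CoprodI.lift_of]
        rfl
    have einj : Function.Injective e := by
      intro u v huv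
      have h1 : e' (e u) = e' (e v) := by rw [huv]
      rw [← MonoidHom.comp_apply, ← MonoidHom.comp_apply, hee] at h1
      exact h1
    set χ : Monoid.Coprod G (FreeGroup Unit) →* L G :=
      Monoid.Coprod.lift (Monoid.CoprodI.of (M := H2 G) (i := true))
        (FreeGroup.lift fun _ : Unit => ox G xA) with hχ
    have hcomm : χ.comp φ = (Monoid.CoprodI.lift (fmap n g)).comp e := by
      refine Monoid.Coprod.hom_ext (MonoidHom.ext fun a => ?_)
        (FreeGroup.ext_hom _ _ fun i => ?_)
      · simp only [MonoidHom.comp_apply, hφ, hχ, he, Monoid.Coprod.lift_apply_inl,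
          Monoid.CoprodI.lift_of]
        rfl
      · have hfm : fmap n g (some i) xA = Vf G ((i : ℕ) + 1) g := by
          show (FreeGroup.lift fun _ => Vf G ((i : ℕ) + 1) g) xA = _
          rw [FreeGroup.lift_apply_of]
        have hxp : ox G ((xA : A) ^ (((i : ℕ) : ℤ) + 1)) = ox G xA ^ ((i : ℕ) + 1) := by
          simp only [ox]
          rw [show ((((i : ℕ) : ℤ)) + 1) = (((i : ℕ) + 1 : ℕ) : ℤ) by push_cast; ring,
            zpow_natCast, map_pow]
        simp only [MonoidHom.comp_apply, hφ, hχ, he, Monoid.Coprod.lift_apply_inr,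
          FreeGroup.lift_apply_of, Monoid.CoprodI.lift_of, hfm, map_mul, map_pow,
          Monoid.Coprod.lift_apply_inl]
        erw [Monoid.Coprod.lift_apply_inr (P := Monoid.CoprodI (HF G n)), FreeGroup.lift_apply_of,
          Monoid.CoprodI.lift_of, hfm]
        rw [Vf, hxp]
        rfl
    have hinj2 : Function.Injective (⇑χ ∘ ⇑φ) := by
      have h2 : ⇑χ ∘ ⇑φ = ⇑((Monoid.CoprodI.lift (fmap n g)).comp e) := by
        rw [← hcomm]; rfl
      rw [h2, MonoidHom.coe_comp]
      exact (lift_inj n hn g hg).comp einj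
    exact hinj2.of_comp
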